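/- Let G be a finite group admitting an effective semitransitive distributive binary action on a set X with at least two points. Then |X| = p^n for some prime p and natural number n ≥ 1. -/

import Mathlib

def IsBinAct {G X : Type*} [Group G] (a : G → X → X → X) : Prop :=
  (∀ g h x y, a (g * h) x y = a g x (a h x y)) ∧ ∀ x y, a 1 x y = y

def IsDistribAct {G X : Type*} [Group G] (a : G → X → X → X) : Prop :=
  ∀ g h x y z, a g x (a h y z) = a h (a g x y) (a g x z)

def IsEffectiveAct {G X : Type*} [Group G] (a : G → X → X → X) : Prop :=
  ∀ g, (∀ x y, a g x y = y) → g = 1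

def IsSemitransAct {G X : Type*} [Group G] (a : G → X → X → X) : Prop :=
  (∀ g x, a g x x = x) ∧ ∀ x y : X, x ≠ y → Set.range (fun g => a g x y) = {x}ᶜ

namespace BinAux

variable {G X : Type*} [Group G]

/-- The permutation of `X` given by acting with `g` based at `x`. -/
def bp (a : G → X → X → X) (ha : IsBinAct a) (g : G) (x : X) : Equiv.Perm X where
  toFun := a g x
  invFun := a g⁻¹ x
  left_inv y := by rw [← ha.1, inv_mul_cancel, ha.2]
  right_inv y := by rw [← ha.1, mul_inv_cancel, ha.2]

variable {a : G → X → X → X}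

lemma bp_apply (ha : IsBinAct a) (g : G) (x y : X) : bp a ha g x y = a g x y := rfl

lemma bp_mul (ha : IsBinAct a) (g h : G) (x : X) :
    bp a ha g x * bp a ha h x = bp a ha (g * h) x :=
  Equiv.ext fun y => (ha.1 g h x y).symm

lemma bp_one (ha : IsBinAct a) (x : X) : bp a ha 1 x = 1 :=
  Equiv.ext fun y => ha.2 x y

lemma bp_inv (ha : IsBinAct a) (g : G) (x : X) : (bp a ha g x)⁻¹ = bp a ha g⁻¹ x :=
  inv_eq_of_mul_eq_one_right (by rw [bp_mul, mul_inv_cancel, bp_one])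

lemma bp_comm (ha : IsBinAct a) (hd : IsDistribAct a) (hs : IsSemitransAct a)
    (g h : G) (x : X) : bp a ha g x * bp a ha h x = bp a ha h x * bp a ha g x :=
  Equiv.ext fun y => by
    have h1 := hd g h x x y
    rw [hs.1 g x] at h1
    exact h1

lemma bp_conj (ha : IsBinAct a) (hd : IsDistribAct a) (g h : G) (x y : X) :
    bp a ha g x * bp a ha h y * (bp a ha g x)⁻¹ = bp a ha h (a g x y) :=
  Equiv.ext fun z => by
    rw [bp_inv]
    show a g x (a h y (a g⁻¹ x z)) = a h (a g x y) z
    rw [hd g h x y (a g⁻¹ x z), ← ha.1, mul_inv_cancel, ha.2]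

theorem main [Finite G] [Nontrivial X]
    (a : G → X → X → X) (ha : IsBinAct a) (he : IsEffectiveAct a) (hd : IsDistribAct a)
    (hs : IsSemitransAct a) (h3 : ∀ u v : X, ∃ w, w ≠ u ∧ w ≠ v) :
    ∃ p n, p.Prime ∧ 1 ≤ n ∧ Nat.card X = p ^ n := by
  classical
  obtain ⟨x₀, y₀, hxy⟩ := exists_pair_ne X
  haveI : Finite X := by
    have h1 : ({x₀}ᶜ : Set X).Finite := by
      rw [← hs.2 x₀ y₀ hxy]
      exact Set.finite_range _
    have h2 : (Set.univ : Set X).Finite := by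
      rw [← Set.union_compl_self ({x₀} : Set X)]
      exact (Set.finite_singleton x₀).union h1
    exact Set.finite_univ_iff.mp h2
  -- freeness
  have free : ∀ (g : G) (x y : X), y ≠ x → a g x y = y → g = 1 := by
    intro g x y hyx hfix
    have hbase : bp a ha g x = 1 := by
      apply Equiv.ext
      intro z
      rcases eq_or_ne z x with rfl | hzx
      · exact hs.1 g z
      · obtain ⟨h, hh⟩ : ∃ h, a h x y = z := by
          have hz : z ∈ Set.range (fun h => a h x y) := by
            rw [hs.2 x y (Ne.symm hyx)]; exact hzx
          exact hz
        have hc : a g x (a h x y) = a h x (a g x y) := by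
          have := congrArg (fun σ : Equiv.Perm X => σ y) (bp_comm ha hd hs g h x)
          simpa [bp_apply] using this
        show a g x z = z
        rw [← hh, hc, hfix]
    have hall : ∀ w : X, bp a ha g w = 1 := by
      have step : ∀ (y' : X), y' ≠ x → ∀ w : X, w ≠ y' → bp a ha g w = 1 := by
        intro y' hy' w hw
        obtain ⟨h, hh⟩ : ∃ h, a h y' x = w := by
          have hw' : w ∈ Set.range (fun h => a h y' x) := by
            rw [hs.2 y' x hy']; exact hw
          exact hw'
        have hcj := bp_conj ha hd h g y' x
        rw [hbase, mul_one, mul_inv_cancel, hh] at hcj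
        exact hcj.symm
      intro w
      obtain ⟨y', hy'x, hy'w⟩ := h3 x w
      exact step y' hy'x w (Ne.symm hy'w)
    apply he
    intro x' y'
    have := congrArg (fun σ : Equiv.Perm X => σ y') (hall x')
    simpa [bp_apply] using this
  -- injectivity of g ↦ a g x ·
  have binj : ∀ (g h : G) (x y : X), y ≠ x → a g x y = a h x y → g = h := by
    intro g h x y hyx heq
    have h1 : a (h⁻¹ * g) x y = y := by
      rw [ha.1, heq, ← ha.1, inv_mul_cancel, ha.2]
    exact (inv_mul_eq_one.mp (free _ x y hyx h1)).symm
  -- the big permutation group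
  set A : Subgroup (Equiv.Perm X) := Subgroup.closure {p | ∃ g x, p = bp a ha g x} with hA
  have genA : ∀ (g : G) (x : X), bp a ha g x ∈ A := fun g x =>
    Subgroup.subset_closure ⟨g, x, rfl⟩
  have conjA : ∀ α ∈ A, ∀ (g : G) (z : X),
      α * bp a ha g z * α⁻¹ = bp a ha g (α z) := by
    intro α hα
    refine Subgroup.closure_induction
      (p := fun β _ => ∀ (g : G) (z : X), β * bp a ha g z * β⁻¹ = bp a ha g (β z))
      ?_ ?_ ?_ ?_ hα
    · rintro β ⟨g', x', rfl⟩ g z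
      exact bp_conj ha hd g' g x' z
    · intro g z; simp
    · intro β γ _ _ hβ hγ g z
      have h1 : β * γ * bp a ha g z * (β * γ)⁻¹ = β * (γ * bp a ha g z * γ⁻¹) * β⁻¹ := by
        group
      rw [h1, hγ, hβ]
      rfl
    · intro β _ hβ g z
      have h2 := hβ g (β⁻¹ z)
      rw [show β (β⁻¹ z) = z from Equiv.apply_symm_apply β z] at h2
      rw [← h2]; group
  -- stabilizer characterization
  have stabA : ∀ α ∈ A, ∀ x : X, α x = x → ∃ g : G, α = bp a ha g x := by
    intro α hα x hfix
    obtain ⟨y₁, hy₁⟩ := exists_ne x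
    have hαy : α y₁ ≠ x := by
      intro h
      exact hy₁ (α.injective (h.trans hfix.symm))
    obtain ⟨k, hk⟩ : ∃ k, a k x y₁ = α y₁ := by
      have h1 : α y₁ ∈ Set.range fun h => a h x y₁ := by
        rw [hs.2 x y₁ (Ne.symm hy₁)]; exact hαy
      exact h1
    refine ⟨k, ?_⟩
    have hcomm : ∀ m : G, ((bp a ha k x)⁻¹ * α) * bp a ha m x
        = bp a ha m x * ((bp a ha k x)⁻¹ * α) := by
      intro m
      have h1 : α * bp a ha m x = bp a ha m x * α := by
        have h2 := conjA α hα m x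
        rw [hfix] at h2
        calc α * bp a ha m x = (α * bp a ha m x * α⁻¹) * α := by group
        _ = bp a ha m x * α := by rw [h2]
      have h2 : (bp a ha k x)⁻¹ * bp a ha m x = bp a ha m x * (bp a ha k x)⁻¹ := by
        rw [bp_inv]; exact bp_comm ha hd hs k⁻¹ m x
      rw [mul_assoc, h1, ← mul_assoc, h2, mul_assoc]
    have hβ1 : ((bp a ha k x)⁻¹ * α) y₁ = y₁ := by
      rw [bp_inv]
      show a k⁻¹ x (α y₁) = y₁
      rw [← hk, ← ha.1, inv_mul_cancel, ha.2]
    have hβx : ((bp a ha k x)⁻¹ * α) x = x := by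
      rw [bp_inv]
      show a k⁻¹ x (α x) = x
      rw [hfix]; exact hs.1 _ _
    have hβ : (bp a ha k x)⁻¹ * α = 1 := by
      apply Equiv.ext
      intro z
      rcases eq_or_ne z x with rfl | hzx
      · simpa using hβx
      · obtain ⟨m, hm⟩ : ∃ m, a m x y₁ = z := by
          have h1 : z ∈ Set.range fun h => a h x y₁ := by
            rw [hs.2 x y₁ (Ne.symm hy₁)]; exact hzx
          exact h1
        have h5 : ((bp a ha k x)⁻¹ * α) (bp a ha m x y₁)
            = bp a ha m x (((bp a ha k x)⁻¹ * α) y₁) := by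
          have := congrArg (fun σ : Equiv.Perm X => σ y₁) (hcomm m)
          simpa using this
        rw [hβ1] at h5
        show ((bp a ha k x)⁻¹ * α) z = z
        rw [← hm]
        exact h5
    exact (inv_mul_eq_one.mp hβ).symm
  -- transitivity
  have transA : ∀ u v : X, ∃ α ∈ A, α u = v := by
    intro u v
    rcases eq_or_ne u v with rfl | huv
    · exact ⟨1, one_mem _, rfl⟩
    · obtain ⟨w, hwu, hwv⟩ := h3 u v
      obtain ⟨g, hg⟩ : ∃ g, a g w u = v := by
        have h1 : v ∈ Set.range fun g => a g w u := by
          rw [hs.2 w u hwu]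
          exact Ne.symm hwv
        exact h1
      exact ⟨bp a ha g w, genA g w, hg⟩
  -- instances
  haveI : Finite (Subgroup ↥A) :=
    Finite.of_injective (fun H : Subgroup ↥A => (H : Set ↥A)) SetLike.coe_injective
  -- stabilizer cardinality
  have stabEquiv : ∀ x : X, Nat.card (MulAction.stabilizer ↥A x) = Nat.card G := by
    intro x
    obtain ⟨y₁, hy₁⟩ := exists_ne x
    have hbij : Function.Bijective
        (fun g : G => (⟨⟨bp a ha g x, genA g x⟩,
          show (⟨bp a ha g x, genA g x⟩ : ↥A) • x = x from hs.1 g x⟩ :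
          MulAction.stabilizer ↥A x)) := by
      constructor
      · intro g h heq
        have h1 := congrArg
          (fun s : MulAction.stabilizer ↥A x => ((s : ↥A) : Equiv.Perm X) y₁) heq
        exact binj g h x y₁ hy₁ h1
      · rintro ⟨⟨β, hβA⟩, hβst⟩
        have hfix : β x = x := hβst
        obtain ⟨g, hg⟩ := stabA β hβA x hfix
        exact ⟨g, by apply Subtype.ext; apply Subtype.ext; exact hg.symm⟩
    exact (Nat.card_congr (Equiv.ofBijective _ hbij)).symm
  -- cardinality of X
  have hcardX : Nat.card X = Nat.card G + 1 := by
    have e2 : G ≃ ({x₀}ᶜ : Set X) := by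
      refine Equiv.ofBijective (fun g => ⟨a g x₀ y₀, hs.2 x₀ y₀ hxy ▸ ⟨g, rfl⟩⟩) ⟨?_, ?_⟩
      · intro g h heq
        exact binj g h x₀ y₀ (Ne.symm hxy) (congrArg Subtype.val heq)
      · rintro ⟨z, hz⟩
        obtain ⟨g, hg⟩ : ∃ g, a g x₀ y₀ = z := by
          have h1 : z ∈ Set.range fun g => a g x₀ y₀ := by
            rw [hs.2 x₀ y₀ hxy]; exact hz
          exact h1
        exact ⟨g, Subtype.ext hg⟩
    have h6 : ({x₀}ᶜ : Set X).ncard = Nat.card G := by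
      rw [← Nat.card_coe_set_eq]
      exact (Nat.card_congr e2).symm
    have h7 := Set.ncard_add_ncard_compl ({x₀} : Set X)
    rw [Set.ncard_singleton, h6] at h7
    omega
  set n := Nat.card X with hn
  set m := Nat.card G with hm
  have hm0 : m ≠ 0 := Nat.card_pos.ne'
  have hn0 : n ≠ 0 := Nat.card_pos.ne'
  have hn1 : 1 < n := Finite.one_lt_card
  -- order of the big group
  have horb : MulAction.orbit ↥A x₀ = Set.univ := by
    ext z
    simp only [Set.mem_univ, iff_true]
    obtain ⟨α, hα, hz⟩ := transA x₀ z
    exact ⟨⟨α, hα⟩, hz⟩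
  have hΓcard : Nat.card ↥A = n * m := by
    have e1 := Nat.card_congr (MulAction.orbitProdStabilizerEquivGroup ↥A x₀)
    rw [Nat.card_prod] at e1
    rw [← e1, stabEquiv x₀, horb]
    congr 1
    exact Nat.card_congr (Equiv.Set.univ X)
  -- q-parts
  have hndvd : ∀ q : ℕ, q.Prime → q ∣ m → ¬ q ∣ n := by
    intro q hq hqm hqn
    have h1 : q ∣ 1 := by
      have := Nat.dvd_sub hqn hqm
      rwa [hcardX, Nat.add_sub_cancel_left] at this
    exact hq.one_lt.ne' (Nat.dvd_one.mp h1)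
  have factq : ∀ q ∈ m.primeFactors, (Nat.card ↥A).factorization q = m.factorization q := by
    intro q hq
    have hqp := Nat.prime_of_mem_primeFactors hq
    have hqm := Nat.dvd_of_mem_primeFactors hq
    rw [hΓcard, Nat.factorization_mul hn0 hm0]
    simp only [Finsupp.coe_add, Pi.add_apply]
    rw [Nat.factorization_eq_zero_of_not_dvd (hndvd q hqp hqm), zero_add]
  -- Burnside normal complements
  have key : ∀ q ∈ m.primeFactors, ∃ K : Subgroup ↥A, K.Normal ∧
      K.index = q ^ m.factorization q ∧ ¬ q ∣ Nat.card K := by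
    intro q hq
    haveI hfq : Fact q.Prime := ⟨Nat.prime_of_mem_primeFactors hq⟩
    set St := MulAction.stabilizer ↥A x₀ with hSt
    obtain ⟨R⟩ : Nonempty (Sylow q ↥St) := inferInstance
    have hRcard : Nat.card (R : Subgroup ↥St) = q ^ m.factorization q := by
      rw [Sylow.card_eq_multiplicity, stabEquiv x₀]
    set Rm : Subgroup ↥A := Subgroup.map St.subtype (R : Subgroup ↥St) with hRm
    have hRmcard : Nat.card Rm = q ^ (Nat.card ↥A).factorization q := by
      rw [factq q hq, ← hRcard]
      exact (Nat.card_congr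
        (Subgroup.equivMapOfInjective (R : Subgroup ↥St) St.subtype
          St.subtype_injective).toEquiv).symm
    set P : Sylow q ↥A := Sylow.ofCard Rm hRmcard with hP
    have hPcoe : (P : Subgroup ↥A) = Rm := rfl
    have hPle : (P : Subgroup ↥A) ≤ St := by
      rw [hPcoe]
      exact Subgroup.map_subtype_le _
    -- only fixed point of a nontrivial stabilizer element
    have onlyfix : ∀ ρ : ↥A, ρ ∈ St → ρ ≠ 1 → ∀ z : X,
        ((ρ : ↥A) : Equiv.Perm X) z = z → z = x₀ := by
      intro ρ hρSt hρ1 z hz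
      obtain ⟨g, hg⟩ := stabA (ρ : Equiv.Perm X) ρ.2 x₀ hρSt
      by_contra hzx
      have hzz : z ≠ x₀ := hzx
      have hg1 : g = 1 := free g x₀ z hzz (by rw [← bp_apply ha, ← hg]; exact hz)
      apply hρ1
      apply Subtype.ext
      rw [hg, hg1, bp_one]
      simp
    -- P is nontrivial
    have hqΓ : q ∣ Nat.card ↥A := by
      rw [hΓcard]
      exact Dvd.dvd.mul_left (Nat.dvd_of_mem_primeFactors hq) n
    have hPbot : (P : Subgroup ↥A) ≠ ⊥ := Sylow.ne_bot_of_dvd_card P hqΓ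
    obtain ⟨ρ, hρP, hρ1⟩ : ∃ ρ ∈ (P : Subgroup ↥A), ρ ≠ 1 := by
      by_contra hcon
      push_neg at hcon
      apply hPbot
      rw [Subgroup.eq_bot_iff_forall]
      exact hcon
    -- normalizer is inside the stabilizer
    have hnorm : Subgroup.normalizer ((P : Subgroup ↥A) : Set ↥A) ≤ St := by
      intro β hβ
      have hconj : β * ρ * β⁻¹ ∈ (P : Subgroup ↥A) :=
        ((Subgroup.mem_normalizer_iff.mp hβ) ρ).mp hρP
      have hne : β * ρ * β⁻¹ ≠ 1 := by
        intro h
        apply hρ1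
        have h1 : ρ = β⁻¹ * (β * ρ * β⁻¹) * β := by group
        rw [h1, h]
        group
      have hfix2 : (β * ρ * β⁻¹) • x₀ = x₀ := hPle hconj
      rw [mul_smul, mul_smul] at hfix2
      have hfix3 : ρ • (β⁻¹ • x₀) = β⁻¹ • x₀ := by
        have h1 : β • (ρ • (β⁻¹ • x₀)) = β • (β⁻¹ • x₀) := by
          rw [hfix2, smul_inv_smul]
        exact smul_left_cancel β h1
      have h2 : β⁻¹ • x₀ = x₀ := onlyfix ρ (hPle hρP) hρ1 _ hfix3
      have h3 : β⁻¹ ∈ St := h2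
      exact (Subgroup.inv_mem_iff St).mp h3
    have hcent : St ≤ Subgroup.centralizer ((P : Subgroup ↥A) : Set ↥A) := by
      intro β hβSt
      rw [Subgroup.mem_centralizer_iff]
      intro ρ' hρ'
      have hρ'St : ρ' ∈ St := hPle hρ'
      obtain ⟨g1, hg1⟩ := stabA (ρ' : Equiv.Perm X) ρ'.2 x₀ hρ'St
      obtain ⟨g2, hg2⟩ := stabA (β : Equiv.Perm X) β.2 x₀ hβSt
      apply Subtype.ext
      show (ρ' : Equiv.Perm X) * (β : Equiv.Perm X) = (β : Equiv.Perm X) * (ρ' : Equiv.Perm X)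
      rw [hg1, hg2]
      exact bp_comm ha hd hs g1 g2 x₀
    have hPnc : Subgroup.normalizer ((P : Subgroup ↥A) : Set ↥A) ≤ Subgroup.centralizer ((P : Subgroup ↥A) : Set ↥A) :=
      fun β hβ => hcent (hnorm hβ)
    haveI : Finite (Sylow q ↥A) :=
      Finite.of_injective (fun P : Sylow q ↥A => (P : Subgroup ↥A))
        (fun P Q h => Sylow.ext h)
    refine ⟨(MonoidHom.transferSylow P hPnc).ker, inferInstance, ?_, ?_⟩
    · rw [(MonoidHom.ker_transferSylow_isComplement' P hPnc).symm.index_eq_card]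
      exact hRmcard.trans (by rw [factq q hq])
    · exact MonoidHom.not_dvd_card_ker_transferSylow P hPnc
  choose K hK1 hK2 hK3 using key
  set M : Subgroup ↥A := ⨅ (i : {q // q ∈ m.primeFactors}), K i.1 i.2 with hM
  have hMmem : ∀ σ : ↥A, σ ∈ M ↔ ∀ i : {q // q ∈ m.primeFactors}, σ ∈ K i.1 i.2 := by
    intro σ
    rw [hM, Subgroup.mem_iInf]
  haveI hMnorm : M.Normal := by
    refine ⟨?_⟩
    intro σ hσ β
    rw [hMmem] at hσ ⊢
    intro i
    exact (hK1 i.1 i.2).conj_mem σ (hσ i) β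
  have hMidx : M.index ≤ m := by
    calc M.index ≤ ∏ i : {q // q ∈ m.primeFactors}, (K i.1 i.2).index :=
      Subgroup.index_iInf_le _
    _ = ∏ i : {q // q ∈ m.primeFactors}, i.1 ^ m.factorization i.1 :=
      Finset.prod_congr rfl (fun i _ => hK2 i.1 i.2)
    _ = ∏ q ∈ m.primeFactors, q ^ m.factorization q :=
      Finset.prod_coe_sort m.primeFactors (fun q => q ^ m.factorization q)
    _ = m := by
      conv_rhs => rw [← Nat.factorization_prod_pow_eq_self hm0]
      rfl
  -- elements of M are fixed-point-free
  have hMfree : ∀ σ : ↥A, σ ∈ M → σ ≠ 1 → ∀ z : X, ((σ : ↥A) : Equiv.Perm X) z ≠ z := by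
    intro σ hσM hσ1 z hz
    have hσst : σ ∈ MulAction.stabilizer ↥A z := hz
    have hdvd : orderOf σ ∣ m := by
      have h8 : orderOf (⟨σ, hσst⟩ : MulAction.stabilizer ↥A z) = orderOf σ :=
        Subgroup.orderOf_mk σ hσst
      rw [← h8, ← stabEquiv z]
      exact orderOf_dvd_natCard _
    have hord1 : orderOf σ ≠ 1 := by
      simpa [orderOf_eq_one_iff] using hσ1
    set d := orderOf σ with hdd
    have hqprime : d.minFac.Prime := Nat.minFac_prime hord1
    have hqd : d.minFac ∣ d := Nat.minFac_dvd d
    have hd0 : d ≠ 0 := by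
      have : 0 < d := orderOf_pos σ
      omega
    have hqm : d.minFac ∈ m.primeFactors :=
      Nat.mem_primeFactors.mpr ⟨hqprime, hqd.trans hdvd, hm0⟩
    have hσ'ord : orderOf (σ ^ (d / d.minFac)) = d.minFac := by
      rw [orderOf_pow, ← hdd, Nat.gcd_eq_right ⟨d.minFac, (Nat.div_mul_cancel hqd).symm⟩,
        Nat.div_div_self hqd hd0]
    have hσ'K : σ ^ (d / d.minFac) ∈ K d.minFac hqm :=
      (hMmem _ |>.mp (pow_mem hσM _)) ⟨d.minFac, hqm⟩
    have hcon : d.minFac ∣ Nat.card (K d.minFac hqm) := by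
      have h9 : orderOf (⟨σ ^ (d / d.minFac), hσ'K⟩ : K d.minFac hqm) = d.minFac := by
        rw [Subgroup.orderOf_mk, hσ'ord]
      exact (dvd_of_eq h9.symm).trans (orderOf_dvd_natCard _)
    exact hK3 d.minFac hqm hcon
  -- M has cardinality n
  have hMcard : Nat.card M = n := by
    have h10 : Nat.card M * M.index = Nat.card ↥A := Subgroup.card_mul_index M
    have hstabM : MulAction.stabilizer ↥M x₀ = ⊥ := by
      rw [Subgroup.eq_bot_iff_forall]
      intro σ hσ
      by_contra hσ1
      have hv1 : (σ : ↥A) ≠ 1 := fun h => hσ1 (Subtype.ext h)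
      exact hMfree (σ : ↥A) σ.2 hv1 x₀ hσ
    have h11 : Nat.card ↥M = Nat.card (MulAction.orbit ↥M x₀) := by
      have e3 := Nat.card_congr (MulAction.orbitProdStabilizerEquivGroup ↥M x₀)
      rw [Nat.card_prod, hstabM, Subgroup.card_bot, mul_one] at e3
      exact e3.symm
    have h12 : Nat.card ↥M ≤ n := by
      rw [h11, Nat.card_coe_set_eq]
      calc (MulAction.orbit ↥M x₀).ncard ≤ (Set.univ : Set X).ncard :=
        Set.ncard_le_ncard (Set.subset_univ _) Set.finite_univ
      _ = n := Set.ncard_univ X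
    have h13 : n ≤ Nat.card ↥M := by
      have h14 : n * m ≤ Nat.card ↥M * m := by
        calc n * m = Nat.card ↥A := hΓcard.symm
        _ = Nat.card ↥M * M.index := h10.symm
        _ ≤ Nat.card ↥M * m := Nat.mul_le_mul_left _ hMidx
      have hmpos : 0 < m := Nat.pos_of_ne_zero hm0
      exact Nat.le_of_mul_le_mul_right h14 hmpos
    omega
  -- all nontrivial elements of M are conjugate, hence have the same order
  haveI : Nontrivial ↥M := by
    apply Finite.one_lt_card_iff_nontrivial.mp
    rw [hMcard]
    exact hn1
  obtain ⟨σ₀, hσ₀⟩ := exists_ne (1 : ↥M)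
  have hσ₀v : (σ₀ : ↥A) ≠ 1 := fun h => hσ₀ (Subtype.ext h)
  have hsame : ∀ σ : ↥A, σ ∈ M → σ ≠ 1 → orderOf σ = orderOf (σ₀ : ↥A) := by
    intro σ hσ hσ1
    have h13 : ((σ₀ : ↥A) : Equiv.Perm X) x₀ ≠ x₀ := hMfree (σ₀ : ↥A) σ₀.2 hσ₀v x₀
    have h14 : ((σ : ↥A) : Equiv.Perm X) x₀ ≠ x₀ := hMfree σ hσ hσ1 x₀
    obtain ⟨k, hk⟩ : ∃ k, a k x₀ (((σ₀ : ↥A) : Equiv.Perm X) x₀)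
        = ((σ : ↥A) : Equiv.Perm X) x₀ := by
      have h15 : ((σ : ↥A) : Equiv.Perm X) x₀
          ∈ Set.range fun k => a k x₀ (((σ₀ : ↥A) : Equiv.Perm X) x₀) := by
        rw [hs.2 x₀ _ (Ne.symm h13)]
        exact h14
      exact h15
    set β : ↥A := ⟨bp a ha k x₀, genA k x₀⟩ with hβ
    have hw : β * (σ₀ : ↥A) * β⁻¹ = σ := by
      have hwM : β * (σ₀ : ↥A) * β⁻¹ ∈ M := hMnorm.conj_mem (σ₀ : ↥A) σ₀.2 β
      have hβinv : ((β⁻¹ : ↥A) : Equiv.Perm X) x₀ = x₀ := by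
        have : ((β⁻¹ : ↥A) : Equiv.Perm X) = (bp a ha k x₀)⁻¹ := rfl
        rw [this, bp_inv]
        exact hs.1 _ _
      have hwx : ((β * (σ₀ : ↥A) * β⁻¹ : ↥A) : Equiv.Perm X) x₀
          = ((σ : ↥A) : Equiv.Perm X) x₀ := by
        show (bp a ha k x₀) (((σ₀ : ↥A) : Equiv.Perm X) (((β⁻¹ : ↥A) : Equiv.Perm X) x₀))
          = ((σ : ↥A) : Equiv.Perm X) x₀
        rw [hβinv]
        exact hk
      have hmem : σ⁻¹ * (β * (σ₀ : ↥A) * β⁻¹) ∈ M := mul_mem (inv_mem hσ) hwM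
      have hfixv : ((σ⁻¹ * (β * (σ₀ : ↥A) * β⁻¹) : ↥A) : Equiv.Perm X) x₀ = x₀ := by
        show ((σ : ↥A) : Equiv.Perm X)⁻¹ (((β * (σ₀ : ↥A) * β⁻¹ : ↥A) : Equiv.Perm X) x₀) = x₀
        rw [hwx]
        exact Equiv.symm_apply_apply _ _
      have h15 : σ⁻¹ * (β * (σ₀ : ↥A) * β⁻¹) = 1 := by
        by_contra h15
        exact hMfree _ hmem h15 x₀ hfixv
      exact (inv_mul_eq_one.mp h15).symm
    rw [← hw, ← MulAut.conj_apply]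
    exact orderOf_injective (MulAut.conj β).toMonoidHom (MulAut.conj β).injective (σ₀ : ↥A)
  -- the common order is a prime p
  set p := orderOf ((σ₀ : ↥A)) with hp
  have hp1 : p ≠ 1 := by
    simpa [hp, orderOf_eq_one_iff] using hσ₀v
  have hp0 : p ≠ 0 := by
    have : 0 < p := orderOf_pos _
    omega
  have hminp : p.minFac.Prime := Nat.minFac_prime hp1
  have hordq : orderOf ((σ₀ : ↥A) ^ (p / p.minFac)) = p.minFac := by
    rw [orderOf_pow, ← hp,
      Nat.gcd_eq_right ⟨p.minFac, (Nat.div_mul_cancel (Nat.minFac_dvd p)).symm⟩,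
      Nat.div_div_self (Nat.minFac_dvd p) hp0]
  have hτ1 : (σ₀ : ↥A) ^ (p / p.minFac) ≠ 1 := by
    intro h
    rw [h, orderOf_one] at hordq
    exact hminp.one_lt.ne' hordq.symm
  have hτM : (σ₀ : ↥A) ^ (p / p.minFac) ∈ M := pow_mem σ₀.2 _
  have hpeq : p.minFac = p := by
    rw [← hordq]
    exact hsame _ hτM hτ1
  have hpprime : p.Prime := hpeq ▸ hminp
  -- conclude
  have hnp : ∀ {r : ℕ}, r.Prime → r ∣ n → r = p := by
    intro r hr hrn
    haveI : Fact r.Prime := ⟨hr⟩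
    obtain ⟨τ, hτ⟩ := exists_prime_orderOf_dvd_card' (G := ↥M) r (by rw [hMcard]; exact hrn)
    have hτ1' : τ ≠ 1 := by
      intro h
      rw [h, orderOf_one] at hτ
      exact hr.one_lt.ne' hτ.symm
    have h16 : orderOf ((τ : ↥A)) = p :=
      hsame (τ : ↥A) τ.2 (fun h => hτ1' (Subtype.ext h))
    have h17 := (Subgroup.orderOf_coe τ).symm.trans h16
    rw [hτ] at h17
    exact h17
  have hfin := Nat.eq_prime_pow_of_unique_prime_dvd hn0 (fun {d} hd hdn => hnp hd hdn)
  refine ⟨p, n.primeFactorsList.length, hpprime, ?_, hfin⟩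
  by_contra hlen
  have h17 : n.primeFactorsList.length = 0 := by omega
  rw [h17, pow_zero] at hfin
  omega

end BinAux

/-- If a finite group acts effectively, semitransitively and distributively on a set `X`
with at least two points, then `|X|` is a prime power. -/
theorem card_eq_prime_pow_of_semitransitive_distributive (G X : Type*) [Group G]
    [Finite G] [Nontrivial X] (a : G → X → X → X) (ha : IsBinAct a)
    (he : IsEffectiveAct a) (hd : IsDistribAct a) (hs : IsSemitransAct a) :
    ∃ (p n : ℕ), p.Prime ∧ 1 ≤ n ∧ Nat.card X = p ^ n := by
  classical
  by_cases h3 : ∀ u v : X, ∃ w, w ≠ u ∧ w ≠ v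
  · exact BinAux.main a ha he hd hs h3
  · push_neg at h3
    obtain ⟨u, v, huv⟩ := h3
    refine ⟨2, 1, Nat.prime_two, le_refl 1, ?_⟩
    haveI : Finite X := by
      obtain ⟨x₀, y₀, hxy⟩ := exists_pair_ne X
      have h1 : ({x₀}ᶜ : Set X).Finite := by
        rw [← hs.2 x₀ y₀ hxy]
        exact Set.finite_range _
      have h2 : (Set.univ : Set X).Finite := by
        rw [← Set.union_compl_self ({x₀} : Set X)]
        exact (Set.finite_singleton x₀).union h1
      exact Set.finite_univ_iff.mp h2
    have hle : Nat.card X ≤ 2 := by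
      have hinj : Function.Injective (fun w : X => if w = u then true else false) := by
        intro w w' hww
        by_cases h1 : w = u <;> by_cases h2 : w' = u
        · rw [h1, h2]
        · simp [h1, h2] at hww
        · simp [h1, h2] at hww
        · rw [huv w h1, huv w' h2]
      calc Nat.card X ≤ Nat.card Bool := Nat.card_le_card_of_injective _ hinj
      _ = 2 := by simp [Nat.card_eq_fintype_card]
    have hge : 1 < Nat.card X := Finite.one_lt_card
    omega
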